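/- The maximum of the optimal value function cannot occur at a state with zero reward: suppose V* : S → ℝ satisfies LV* = V*, R(s) ≥ 0 for all s ∈ S, and R(s₀) > 0 for some s₀ ∈ S. Then every state s_m at which V* attains its maximum over S satisfies R(s_m) > 0; equivalently, for every s_z ∈ S with R(s_z) = 0 one has V*(s_z) < max_{s∈S} V*(s). -/
import Mathlib


/-- The Bellman operator of a finite MDP with transition probabilities `P`,
reward `R`, and discount factor `γ`:
`(L V)(s) = R s + γ * max_{a} ∑_{s'} P s a s' * V s'`. -/
noncomputable def bellmanOp {S A : Type*} [Fintype S] [Fintype A] [Nonempty A]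
    (P : S → A → S → ℝ) (R : S → ℝ) (γ : ℝ) (V : S → ℝ) : S → ℝ :=
  fun s => R s + γ * Finset.univ.sup' Finset.univ_nonempty
    (fun a : A => ∑ s' : S, P s a s' * V s')

/-- The maximum of the optimal value function cannot occur at a state with
zero reward: if `L V* = V*`, `R ≥ 0`, and `R s₀ > 0` for some `s₀`, then
every state at which `V*` attains its maximum has positive reward;
equivalently, every zero-reward state has `V*` strictly below the maximum. -/
theorem max_of_value_not_at_zero_reward
    {S A : Type*} [Fintype S] [Nonempty S] [Fintype A] [Nonempty A]
    (P : S → A → S → ℝ) (R : S → ℝ) (γ : ℝ) (hγ0 : 0 < γ) (hγ1 : γ < 1)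
    (hP0 : ∀ s a s', 0 ≤ P s a s') (hP1 : ∀ s a, ∑ s' : S, P s a s' = 1)
    (Vstar : S → ℝ) (hfix : bellmanOp P R γ Vstar = Vstar)
    (hR : ∀ s, 0 ≤ R s) (s₀ : S) (hs₀ : 0 < R s₀) :
    (∀ s_m : S, (∀ s : S, Vstar s ≤ Vstar s_m) → 0 < R s_m) ∧
      (∀ s_z : S, R s_z = 0 →
        Vstar s_z < Finset.univ.sup' Finset.univ_nonempty Vstar) := by
  have hfix' : ∀ s, R s + γ * Finset.univ.sup' Finset.univ_nonempty
      (fun a : A => ∑ s' : S, P s a s' * Vstar s') = Vstar s := fun s =>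
    congrFun hfix s
  -- the sup in the Bellman operator is bounded by any upper bound of Vstar
  have hsup_le : ∀ (s : S) (c : ℝ), (∀ s', Vstar s' ≤ c) →
      Finset.univ.sup' Finset.univ_nonempty
        (fun a : A => ∑ s' : S, P s a s' * Vstar s') ≤ c := by
    intro s c hc
    apply Finset.sup'_le
    intro a _
    calc ∑ s' : S, P s a s' * Vstar s' ≤ ∑ s' : S, P s a s' * c :=
          Finset.sum_le_sum (fun s' _ =>
            mul_le_mul_of_nonneg_left (hc s') (hP0 s a s'))
      _ = c := by rw [← Finset.sum_mul, hP1, one_mul]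
  have hsup_ge : ∀ (s : S) (c : ℝ), (∀ s', c ≤ Vstar s') →
      c ≤ Finset.univ.sup' Finset.univ_nonempty
        (fun a : A => ∑ s' : S, P s a s' * Vstar s') := by
    intro s c hc
    obtain ⟨a⟩ := ‹Nonempty A›
    refine le_trans ?_ (Finset.le_sup' _ (Finset.mem_univ a))
    calc c = ∑ s' : S, P s a s' * c := by rw [← Finset.sum_mul, hP1, one_mul]
      _ ≤ ∑ s' : S, P s a s' * Vstar s' :=
        Finset.sum_le_sum (fun s' _ =>
          mul_le_mul_of_nonneg_left (hc s') (hP0 s a s'))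
  -- Vstar is nonnegative
  obtain ⟨smin, _, hmin⟩ := Finset.exists_min_image Finset.univ Vstar
    Finset.univ_nonempty
  have hmin' : ∀ s', Vstar smin ≤ Vstar s' := fun s' => hmin s' (Finset.mem_univ s')
  have hVmin0 : 0 ≤ Vstar smin := by
    have h1 := hsup_ge smin (Vstar smin) hmin'
    have h2 := hfix' smin
    nlinarith [hR smin]
  have hVnn : ∀ s, 0 ≤ Vstar s := fun s => le_trans hVmin0 (hmin' s)
  -- Vstar s₀ > 0
  have hV0 : 0 < Vstar s₀ := by
    have h1 := hsup_ge s₀ 0 hVnn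
    have h2 := hfix' s₀
    nlinarith
  have key : ∀ s_m : S, (∀ s : S, Vstar s ≤ Vstar s_m) → 0 < R s_m := by
    intro s_m hmax
    by_contra h
    have hRm : R s_m = 0 := le_antisymm (not_lt.mp h) (hR s_m)
    have h1 := hsup_le s_m (Vstar s_m) hmax
    have h2 := hfix' s_m
    have h3 : 0 < Vstar s_m := lt_of_lt_of_le hV0 (hmax s₀)
    nlinarith
  refine ⟨key, ?_⟩
  intro s_z hRz
  by_contra h
  push_neg at h
  have hmax : ∀ s, Vstar s ≤ Vstar s_z := fun s =>
    le_trans (Finset.le_sup' Vstar (Finset.mem_univ s)) h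
  exact absurd hRz (ne_of_gt (key s_z hmax))
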